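/- Define φ(ρ) = (√2/(2π²)) ∫_ρ^∞ dr/(r·√(cosh r − cosh ρ)) for ρ > 0. Then φ(ρ) ≤ 1/(4π·sinh(ρ/2)) for all ρ > 0. -/

import Mathlib

open Real MeasureTheory Set Filter Topology

lemma sinh_le_mul_cosh {x : ℝ} (hx : 0 ≤ x) : Real.sinh x ≤ x * Real.cosh x := by
  have key : MonotoneOn (fun x => x * Real.cosh x - Real.sinh x) (Ici 0) := by
    apply monotoneOn_of_deriv_nonneg (convex_Ici 0)
    · exact ((continuous_id.mul Real.continuous_cosh).sub Real.continuous_sinh).continuousOn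
    · intro y _
      exact (((hasDerivAt_id' y).mul (Real.hasDerivAt_cosh y)).sub
        (Real.hasDerivAt_sinh y)).differentiableAt.differentiableWithinAt
    · intro y hy
      rw [interior_Ici] at hy
      have h := (((hasDerivAt_id' y).mul (Real.hasDerivAt_cosh y)).sub
        (Real.hasDerivAt_sinh y)).deriv
      rw [show deriv (fun x => x * Real.cosh x - Real.sinh x) y = _ from h]
      have : 0 ≤ Real.sinh y := Real.sinh_nonneg_iff.2 hy.le
      nlinarith [mul_nonneg hy.le this]
  have h0 := key self_mem_Ici hx hx
  simp only [Real.cosh_zero, Real.sinh_zero, zero_mul, sub_zero] at h0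
  linarith

lemma tendsto_sqrt_atTop' : Tendsto Real.sqrt atTop atTop := by
  have h := tendsto_rpow_atTop (by norm_num : (0:ℝ) < 1/2)
  exact h.congr' (by filter_upwards [eventually_ge_atTop (0:ℝ)] with x _ using
    (Real.sqrt_eq_rpow x).symm)

lemma tendsto_sinh_atTop' : Tendsto Real.sinh atTop atTop := by
  apply tendsto_atTop_mono' atTop _ tendsto_id
  filter_upwards [eventually_ge_atTop (0:ℝ)] with x hx
  rcases hx.eq_or_lt with h | h
  · simp [← h]
  · exact (Real.self_lt_sinh_iff.2 h).le

lemma cosh_eq_two_sinh_half_sq (x : ℝ) :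
    Real.cosh x = 2 * Real.sinh (x/2) ^ 2 + 1 := by
  have h := Real.cosh_two_mul (x/2)
  rw [show 2 * (x/2) = x by ring] at h
  rw [h, Real.cosh_sq]; ring

theorem stmt_5
    (φ : ℝ → ℝ)
    (hφ : ∀ ρ > 0, φ ρ =
      Real.sqrt 2 / (2 * π ^ 2) *
        ∫ r in Ioi ρ, 1 / (r * Real.sqrt (Real.cosh r - Real.cosh ρ))) :
    ∀ ρ > 0, φ ρ ≤ 1 / (4 * π * Real.sinh (ρ / 2)) := by
  intro ρ hρ
  set a := Real.sinh (ρ/2) with ha_def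
  have ha : 0 < a := Real.sinh_pos_iff.2 (by linarith)
  have hs2 : (0:ℝ) < Real.sqrt 2 := Real.sqrt_pos.2 (by norm_num)
  -- the comparison function and its derivative
  set G : ℝ → ℝ := fun r => (Real.sqrt 2 * a)⁻¹ *
    Real.arctan (Real.sqrt (Real.sinh (r/2) ^ 2 - a ^ 2) / a) with hG_def
  set G' : ℝ → ℝ := fun r => Real.cosh (r/2) /
    (2 * Real.sqrt 2 * Real.sinh (r/2) * Real.sqrt (Real.sinh (r/2) ^ 2 - a ^ 2)) with hG'_def
  have hv_pos : ∀ r ∈ Ioi ρ, 0 < Real.sinh (r/2) ^ 2 - a ^ 2 := by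
    intro r hr
    have h1 : a < Real.sinh (r/2) := Real.sinh_lt_sinh.2 (by simp at hr; linarith)
    have := pow_lt_pow_left₀ h1 ha.le (n := 2) (by norm_num)
    linarith
  have hsinh_pos : ∀ r ∈ Ioi ρ, 0 < Real.sinh (r/2) := by
    intro r hr
    exact Real.sinh_pos_iff.2 (by simp at hr; linarith)
  have hderiv : ∀ r ∈ Ioi ρ, HasDerivAt G (G' r) r := by
    intro r hr
    have hv := hv_pos r hr
    have hs := hsinh_pos r hr
    have hu : HasDerivAt (fun x : ℝ => Real.sinh (x/2)) (Real.cosh (r/2) * (1/2)) r := by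
      have := (Real.hasDerivAt_sinh (r/2)).comp r ((hasDerivAt_id' r).div_const 2)
      exact this
    have hv' : HasDerivAt (fun x : ℝ => Real.sinh (x/2) ^ 2 - a ^ 2)
        (2 * Real.sinh (r/2) ^ 1 * (Real.cosh (r/2) * (1/2))) r := (hu.pow 2).sub_const _
    have hw : HasDerivAt (fun x : ℝ => Real.sqrt (Real.sinh (x/2) ^ 2 - a ^ 2))
        (1 / (2 * Real.sqrt (Real.sinh (r/2) ^ 2 - a ^ 2)) *
          (2 * Real.sinh (r/2) ^ 1 * (Real.cosh (r/2) * (1/2)))) r := by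
      exact (Real.hasDerivAt_sqrt hv.ne').comp r hv'
    have ht : HasDerivAt (fun x : ℝ => Real.sqrt (Real.sinh (x/2) ^ 2 - a ^ 2) / a)
        ((1 / (2 * Real.sqrt (Real.sinh (r/2) ^ 2 - a ^ 2)) *
          (2 * Real.sinh (r/2) ^ 1 * (Real.cosh (r/2) * (1/2)))) / a) r := hw.div_const a
    have harc := (Real.hasDerivAt_arctan (Real.sqrt (Real.sinh (r/2) ^ 2 - a ^ 2) / a)).comp r ht
    have hmain := harc.const_mul ((Real.sqrt 2 * a)⁻¹)
    refine hmain.congr_deriv ?_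
    have hq : Real.sqrt (Real.sinh (r/2) ^ 2 - a ^ 2) ^ 2 = Real.sinh (r/2) ^ 2 - a ^ 2 :=
      Real.sq_sqrt hv.le
    have hqpos : 0 < Real.sqrt (Real.sinh (r/2) ^ 2 - a ^ 2) := Real.sqrt_pos.2 hv
    have hden : 1 + (Real.sqrt (Real.sinh (r/2) ^ 2 - a ^ 2) / a) ^ 2
        = Real.sinh (r/2) ^ 2 / a ^ 2 := by
      rw [div_pow, hq]
      field_simp
      ring
    rw [hG'_def]
    simp only []
    rw [hden]
    field_simp
  have hG'nonneg : ∀ r ∈ Ioi ρ, 0 ≤ G' r := by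
    intro r hr
    have hs := hsinh_pos r hr
    have := Real.sqrt_nonneg (Real.sinh (r/2) ^ 2 - a ^ 2)
    positivity
  have hGcont : ContinuousWithinAt G (Ici ρ) ρ := by
    have : Continuous G := by
      apply Continuous.mul continuous_const
      apply Real.continuous_arctan.comp
      apply Continuous.div_const
      exact Real.continuous_sqrt.comp
        (((Real.continuous_sinh.comp (continuous_id.div_const 2)).pow 2).sub continuous_const)
    exact this.continuousWithinAt
  have hGtop : Tendsto G atTop (𝓝 ((Real.sqrt 2 * a)⁻¹ * (π/2))) := by
    have h1 : Tendsto (fun r : ℝ => r/2) atTop atTop :=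
      Tendsto.atTop_div_const (by norm_num) tendsto_id
    have h2 : Tendsto (fun r : ℝ => Real.sinh (r/2)) atTop atTop := tendsto_sinh_atTop'.comp h1
    have h3 : Tendsto (fun r : ℝ => Real.sinh (r/2) ^ 2 - a ^ 2) atTop atTop := by
      apply tendsto_atTop_add_const_right
      have := h2.atTop_mul_atTop₀ h2
      exact this.congr (fun r => by ring)
    have h4 : Tendsto (fun r : ℝ => Real.sqrt (Real.sinh (r/2) ^ 2 - a ^ 2) / a) atTop atTop :=
      Tendsto.atTop_div_const ha (tendsto_sqrt_atTop'.comp h3)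
    have h5 := (Real.tendsto_arctan_atTop.mono_right nhdsWithin_le_nhds).comp h4
    exact (h5.const_mul _)
  have hGρ : G ρ = 0 := by
    rw [hG_def]
    simp only [← ha_def, sub_self, Real.sqrt_zero, zero_div, Real.arctan_zero, mul_zero]
  have hG'int : IntegrableOn G' (Ioi ρ) :=
    integrableOn_Ioi_deriv_of_nonneg hGcont hderiv hG'nonneg hGtop
  have hG'val : ∫ r in Ioi ρ, G' r = (Real.sqrt 2 * a)⁻¹ * (π/2) := by
    rw [integral_Ioi_of_hasDerivAt_of_nonneg hGcont hderiv hG'nonneg hGtop, hGρ, sub_zero]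
  -- the integrand and pointwise comparison
  set f : ℝ → ℝ := fun r => 1 / (r * Real.sqrt (Real.cosh r - Real.cosh ρ)) with hf_def
  have hid : ∀ r : ℝ, Real.cosh r - Real.cosh ρ = 2 * (Real.sinh (r/2) ^ 2 - a ^ 2) := by
    intro r
    rw [cosh_eq_two_sinh_half_sq r, cosh_eq_two_sinh_half_sq ρ, ha_def]
    ring
  have hle : ∀ r ∈ Ioi ρ, f r ≤ G' r := by
    intro r hr
    have hrρ : ρ < r := hr
    have hr0 : 0 < r := lt_trans hρ hrρ
    have hv := hv_pos r hr
    have hs := hsinh_pos r hr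
    have hqpos : 0 < Real.sqrt (Real.sinh (r/2) ^ 2 - a ^ 2) := Real.sqrt_pos.2 hv
    have hsqrt : Real.sqrt (Real.cosh r - Real.cosh ρ)
        = Real.sqrt 2 * Real.sqrt (Real.sinh (r/2) ^ 2 - a ^ 2) := by
      rw [hid r, Real.sqrt_mul (by norm_num)]
    rw [hf_def, hG'_def]
    simp only []
    rw [hsqrt]
    have hkey : 2 * Real.sinh (r/2) ≤ r * Real.cosh (r/2) := by
      have := sinh_le_mul_cosh (x := r/2) (by linarith)
      linarith
    rw [div_le_div_iff₀ (by positivity) (by positivity)]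
    have hc : 0 < Real.cosh (r/2) := Real.cosh_pos _
    nlinarith [mul_nonneg hs2.le hqpos.le, mul_pos hs2 hqpos]
  have hf_nonneg : ∀ r ∈ Ioi ρ, 0 ≤ f r := by
    intro r hr
    have hr0 : (0:ℝ) < r := lt_trans hρ hr
    have := Real.sqrt_nonneg (Real.cosh r - Real.cosh ρ)
    positivity
  have hf_meas : AEStronglyMeasurable f (volume.restrict (Ioi ρ)) := by
    apply ContinuousOn.aestronglyMeasurable _ measurableSet_Ioi
    apply ContinuousOn.div continuousOn_const
    · exact (continuousOn_id.mul ((Real.continuous_sqrt.comp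
        (Real.continuous_cosh.sub continuous_const)).continuousOn))
    · intro r hr
      have hr0 : (0:ℝ) < r := lt_trans hρ hr
      have hq : 0 < Real.sqrt (Real.cosh r - Real.cosh ρ) := by
        rw [hid r]
        exact Real.sqrt_pos.2 (by have := hv_pos r hr; linarith)
      exact mul_ne_zero hr0.ne' hq.ne'
  have hf_int : IntegrableOn f (Ioi ρ) := by
    apply Integrable.mono' hG'int hf_meas
    filter_upwards [ae_restrict_mem measurableSet_Ioi] with r hr
    rw [Real.norm_eq_abs, abs_of_nonneg (hf_nonneg r hr)]
    exact hle r hr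
  have hI : ∫ r in Ioi ρ, f r ≤ (Real.sqrt 2 * a)⁻¹ * (π/2) := by
    rw [← hG'val]
    exact setIntegral_mono_on hf_int hG'int measurableSet_Ioi hle
  rw [hφ ρ hρ]
  have hfactor : (0:ℝ) ≤ Real.sqrt 2 / (2 * π ^ 2) := by positivity
  calc Real.sqrt 2 / (2 * π ^ 2) * ∫ r in Ioi ρ, 1 / (r * Real.sqrt (Real.cosh r - Real.cosh ρ))
      ≤ Real.sqrt 2 / (2 * π ^ 2) * ((Real.sqrt 2 * a)⁻¹ * (π/2)) :=
        mul_le_mul_of_nonneg_left hI hfactor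
    _ = 1 / (4 * π * a) := by
        have hπ : (0:ℝ) < π := Real.pi_pos
        have h2 : Real.sqrt 2 * Real.sqrt 2 = 2 := Real.mul_self_sqrt (by norm_num)
        field_simp
        nlinarith [h2]
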